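/- Let f_i(r) = r^{a_i}(1-r)^{b_i - 1} for 1 ≤ i ≤ n with all a_i ≥ 0, b_i > 0, and let h be their iterated Mellin convolution h = f_1 * f_2 * ⋯ * f_n. Then |h(r)| ≤ C r^α (1-r)^{β-1} (ln(e/r))^{n-1} for all r ∈ (0,1), where α = min_i a_i and β = Σ_i b_i. -/

import Mathlib

set_option maxHeartbeats 1000000


open MeasureTheory Set

/-- The Mellin convolution of two functions on `(0,1]`:
`(f*g)(r) = ∫_r^1 f(r/t) g(t) dt/t`. -/
noncomputable def mellinConv (f g : ℝ → ℝ) (r : ℝ) : ℝ :=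
  ∫ t in Set.Ioc r 1, f (r / t) * g t / t

/-- The iterated Mellin convolution `f 0 * f 1 * ⋯ * f n` (of `n + 1` functions). -/
noncomputable def iterConv (f : ℕ → ℝ → ℝ) : ℕ → ℝ → ℝ
  | 0 => f 0
  | n + 1 => mellinConv (iterConv f n) (f (n + 1))


open MeasureTheory Set

/-! ### Log helpers -/

lemma logE_eq {r : ℝ} (hr : 0 < r) : Real.log (Real.exp 1 / r) = 1 - Real.log r := by
  rw [Real.log_div (Real.exp_ne_zero 1) hr.ne', Real.log_exp]

lemma one_le_logE {r : ℝ} (hr0 : 0 < r) (hr1 : r ≤ 1) : 1 ≤ Real.log (Real.exp 1 / r) := by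
  rw [logE_eq hr0]
  have := Real.log_nonpos hr0.le hr1
  linarith

lemma logE_anti {r x : ℝ} (hr : 0 < r) (hx : r ≤ x) :
    Real.log (Real.exp 1 / x) ≤ Real.log (Real.exp 1 / r) := by
  rw [logE_eq hr, logE_eq (hr.trans_le hx)]
  have := Real.log_le_log hr hx
  linarith

lemma log_m_bound {r : ℝ} (hr0 : 0 < r) (hr1 : r < 1) :
    Real.log ((1 + r) / 2) - Real.log r ≤ 2 * (1 - r) * Real.log (Real.exp 1 / r) := by
  have hL1 : 1 ≤ Real.log (Real.exp 1 / r) := one_le_logE hr0 hr1.le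
  rcases le_or_gt (1/2 : ℝ) r with h | h
  · have h1 : Real.log ((1 + r) / 2) - Real.log r = Real.log ((1 + r) / 2 / r) := by
      rw [Real.log_div (by positivity) hr0.ne']
    have h2 : Real.log ((1 + r) / 2 / r) ≤ (1 + r) / 2 / r - 1 :=
      Real.log_le_sub_one_of_pos (by positivity)
    have h3 : (1 + r) / 2 / r - 1 ≤ 1 - r := by
      rw [div_sub_one hr0.ne', div_le_iff₀ hr0]
      nlinarith
    have h4 : (1 - r) * 1 ≤ (1 - r) * Real.log (Real.exp 1 / r) := by
      apply mul_le_mul_of_nonneg_left hL1 (by linarith)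
    nlinarith [mul_le_mul_of_nonneg_left hL1 (show (0:ℝ) ≤ 1 - r by linarith)]
  · have h1 : Real.log ((1 + r) / 2) ≤ 0 := Real.log_nonpos (by positivity) (by linarith)
    have h2 : - Real.log r ≤ Real.log (Real.exp 1 / r) := by
      rw [logE_eq hr0]; linarith [Real.log_nonpos hr0.le hr1.le]
    have h3 : 1 ≤ 2 * (1 - r) := by linarith
    nlinarith [one_le_logE hr0 hr1.le]

/-! ### rpow helpers -/

lemma rpow_sub_one_le {u v p : ℝ} (hu : 0 < u) (huv : u ≤ v) (hvu : v ≤ 2 * u) :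
    u ^ (p - 1) ≤ 2 ^ max (1 - p) 0 * v ^ (p - 1) := by
  have hv : 0 < v := hu.trans_le huv
  rcases le_total 1 p with h | h
  · rw [max_eq_right (by linarith), Real.rpow_zero, one_mul]
    exact Real.rpow_le_rpow hu.le huv (by linarith)
  · rw [max_eq_left (by linarith)]
    have h1 : u ^ (p - 1) ≤ (v / 2) ^ (p - 1) :=
      Real.rpow_le_rpow_of_nonpos (by positivity) (by linarith) (by linarith)
    have h2 : (v / 2) ^ (p - 1) = 2 ^ (1 - p) * v ^ (p - 1) := by
      rw [Real.div_rpow hv.le (by norm_num), div_eq_mul_inv, mul_comm,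
        ← Real.rpow_neg (by norm_num), neg_sub]
    rw [h2] at h1; exact h1

lemma rt_pow {r t α aa : ℝ} (hr : 0 < r) (ht : r < t) (ht1 : t ≤ 1) (hα : 0 ≤ α)
    (ha : 0 ≤ aa) : (r / t) ^ α * t ^ aa ≤ r ^ min α aa := by
  have ht0 : 0 < t := hr.trans ht
  rcases le_total α aa with h | h
  · rw [min_eq_left h]
    have e : (r / t) ^ α * t ^ aa = r ^ α * t ^ (aa - α) := by
      rw [Real.div_rpow hr.le ht0.le, Real.rpow_sub ht0]
      field_simp
    rw [e]
    have : t ^ (aa - α) ≤ 1 := Real.rpow_le_one ht0.le ht1 (by linarith)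
    calc r ^ α * t ^ (aa - α) ≤ r ^ α * 1 :=
          mul_le_mul_of_nonneg_left this (Real.rpow_nonneg hr.le _)
      _ = r ^ α := mul_one _
  · rw [min_eq_right h]
    have h1 : (r / t) ^ α ≤ (r / t) ^ aa :=
      Real.rpow_le_rpow_of_exponent_ge (div_pos hr ht0) ((div_le_one ht0).2 ht.le) h
    have h2 : (r / t) ^ aa * t ^ aa = r ^ aa := by
      rw [← Real.mul_rpow (by positivity) ht0.le, div_mul_cancel₀ _ ht0.ne']
    calc (r / t) ^ α * t ^ aa ≤ (r / t) ^ aa * t ^ aa :=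
          mul_le_mul_of_nonneg_right h1 (Real.rpow_nonneg ht0.le _)
      _ = r ^ aa := h2

/-! ### Integral computations -/

lemma integral_inv_Ioc {a c : ℝ} (ha : 0 < a) (hac : a ≤ c) :
    ∫ t in Ioc a c, 1 / t = Real.log c - Real.log a := by
  rw [← intervalIntegral.integral_of_le hac, integral_one_div
    (by rw [Set.uIcc_of_le hac]; rintro ⟨h1, h2⟩; linarith),
    Real.log_div (ha.trans_le hac).ne' ha.ne']

lemma inv_integrableOn {a c : ℝ} (ha : 0 < a) :
    IntegrableOn (fun t : ℝ => 1 / t) (Ioc a c) := by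
  apply (ContinuousOn.integrableOn_Icc ?_).mono_set Ioc_subset_Icc_self
  exact continuousOn_const.div continuousOn_id fun x hx => (ha.trans_le hx.1).ne'

lemma sub_rpow_integrableOn {r c β : ℝ} (hβ : 0 < β) :
    IntegrableOn (fun t : ℝ => (t - r) ^ (β - 1)) (Ioc r c) := by
  rcases le_or_gt r c with hrc | hrc
  · have h : IntervalIntegrable (fun x : ℝ => x ^ (β - 1)) volume 0 (c - r) :=
      intervalIntegral.intervalIntegrable_rpow' (by linarith)
    have h2 := h.comp_sub_right r
    rw [zero_add, sub_add_cancel] at h2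
    exact (intervalIntegrable_iff_integrableOn_Ioc_of_le hrc).1 h2
  · rw [Set.Ioc_eq_empty (by linarith)]
    simp [IntegrableOn]

lemma integral_sub_rpow {r c β : ℝ} (hrc : r ≤ c) (hβ : 0 < β) :
    ∫ t in Ioc r c, (t - r) ^ (β - 1) = (c - r) ^ β / β := by
  rw [← intervalIntegral.integral_of_le hrc,
    intervalIntegral.integral_comp_sub_right (fun x : ℝ => x ^ (β - 1)) r,
    integral_rpow (Or.inl (by linarith))]
  rw [sub_self, Real.zero_rpow (by linarith), sub_add_cancel, sub_zero]

lemma one_sub_rpow_integrableOn {m b : ℝ} (hm : m ≤ 1) (hb : 0 < b) :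
    IntegrableOn (fun t : ℝ => (1 - t) ^ (b - 1)) (Ioc m 1) := by
  have h : IntervalIntegrable (fun x : ℝ => x ^ (b - 1)) volume 0 (1 - m) :=
    intervalIntegral.intervalIntegrable_rpow' (by linarith)
  have h2 := h.comp_sub_left 1
  rw [sub_zero, sub_sub_cancel] at h2
  exact (intervalIntegrable_iff_integrableOn_Ioc_of_le hm).1 h2.symm

lemma integral_one_sub_rpow {m b : ℝ} (hm : m ≤ 1) (hb : 0 < b) :
    ∫ t in Ioc m 1, (1 - t) ^ (b - 1) = (1 - m) ^ b / b := by
  rw [← intervalIntegral.integral_of_le hm,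
    intervalIntegral.integral_comp_sub_left (fun x : ℝ => x ^ (b - 1)) 1,
    sub_self, integral_rpow (Or.inl (by linarith))]
  rw [Real.zero_rpow (by linarith), sub_add_cancel, sub_zero]


section
variable {r m β : ℝ}

lemma core_contOn (hr : 0 < r) :
    ContinuousOn (fun t : ℝ => (1 - r / t) ^ (β - 1) / t) (Ioc r m) := by
  have ht : ∀ t ∈ Ioc r m, t ≠ 0 := fun t htm => (hr.trans htm.1).ne'
  have h1 : ContinuousOn (fun t : ℝ => 1 - r / t) (Ioc r m) :=
    continuousOn_const.sub (continuousOn_const.div continuousOn_id ht)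
  have h2 : ContinuousOn (fun t : ℝ => (1 - r / t) ^ (β - 1)) (Ioc r m) := by
    apply h1.rpow_const
    intro t htm
    left
    have h3 : r / t < 1 := (div_lt_one (hr.trans htm.1)).2 htm.1
    intro h
    nlinarith
  exact h2.div continuousOn_id ht

lemma core_nonneg (hr : 0 < r) {t : ℝ} (ht : t ∈ Ioc r m) :
    0 ≤ (1 - r / t) ^ (β - 1) / t := by
  have ht0 : 0 < t := hr.trans ht.1
  have : r / t < 1 := (div_lt_one ht0).2 ht.1
  exact div_nonneg (Real.rpow_nonneg (by linarith) _) ht0.le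

lemma core_pt_le (hr : 0 < r) (hβ : 0 < β) {t : ℝ} (ht : t ∈ Ioc r m) :
    (1 - r / t) ^ (β - 1) / t ≤ r ^ (-β) * (t - r) ^ (β - 1) := by
  have ht0 : 0 < t := hr.trans ht.1
  have htr : 0 < t - r := by linarith [ht.1]
  have e1 : 1 - r / t = (t - r) / t := by field_simp
  have e3 : t ^ (β - 1) * t = t ^ β := by
    rw [← Real.rpow_add_one ht0.ne' (β - 1)]; congr 1; ring
  have e2 : (1 - r / t) ^ (β - 1) / t = (t - r) ^ (β - 1) * t ^ (-β) := by
    rw [e1, Real.div_rpow htr.le ht0.le, div_div, e3, Real.rpow_neg ht0.le, div_eq_mul_inv]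
  rw [e2, mul_comm ((r:ℝ) ^ (-β)) _]
  exact mul_le_mul_of_nonneg_left
    (Real.rpow_le_rpow_of_nonpos hr ht.1.le (by linarith)) (Real.rpow_nonneg htr.le _)

lemma core_integrable (hr : 0 < r) (hβ : 0 < β) :
    IntegrableOn (fun t : ℝ => (1 - r / t) ^ (β - 1) / t) (Ioc r m) := by
  apply Integrable.mono' ((sub_rpow_integrableOn (r := r) (c := m) hβ).const_mul (r ^ (-β)))
    ((core_contOn hr).aestronglyMeasurable measurableSet_Ioc)
  refine (ae_restrict_iff' measurableSet_Ioc).2 (Filter.Eventually.of_forall fun t htm => ?_)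
  rw [Real.norm_eq_abs, abs_of_nonneg (core_nonneg hr htm)]
  exact core_pt_le hr hβ htm

end

lemma core_bound {β : ℝ} (hβ : 0 < β) :
    ∃ K : ℝ, 0 ≤ K ∧ ∀ r : ℝ, 0 < r → r < 1 →
      ∫ t in Ioc r ((1 + r) / 2), (1 - r / t) ^ (β - 1) / t ≤
        K * ((1 - r) ^ β * Real.log (Real.exp 1 / r)) := by
  rcases le_or_gt 1 β with hβ1 | hβ1
  · refine ⟨2, by norm_num, fun r hr0 hr1 => ?_⟩
    set m := (1 + r) / 2 with hm
    have hrm : r < m := by rw [hm]; linarith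
    have hm1 : m < 1 := by rw [hm]; linarith
    have hL1 : 1 ≤ Real.log (Real.exp 1 / r) := one_le_logE hr0 hr1.le
    have h1r : (0:ℝ) < 1 - r := by linarith
    have hpt : ∀ t ∈ Ioc r m, (1 - r / t) ^ (β - 1) / t ≤ (1 - r) ^ (β - 1) * (1 / t) := by
      intro t ht
      have ht0 : 0 < t := hr0.trans ht.1
      have ht1 : t ≤ 1 := le_of_lt (lt_of_le_of_lt ht.2 hm1)
      have h1 : r / t < 1 := (div_lt_one ht0).2 ht.1
      have h2 : r ≤ r / t := by rw [le_div_iff₀ ht0]; nlinarith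
      have h3 : (1 - r / t) ^ (β - 1) ≤ (1 - r) ^ (β - 1) :=
        Real.rpow_le_rpow (by linarith) (by linarith) (by linarith)
      rw [div_eq_mul_one_div]
      exact mul_le_mul_of_nonneg_right h3 (by positivity)
    have hint := core_integrable (m := m) (β := β) hr0 hβ
    have hint2 : IntegrableOn (fun t : ℝ => (1 - r) ^ (β - 1) * (1 / t)) (Ioc r m) :=
      (inv_integrableOn hr0).const_mul _
    calc ∫ t in Ioc r m, (1 - r / t) ^ (β - 1) / t
        ≤ ∫ t in Ioc r m, (1 - r) ^ (β - 1) * (1 / t) :=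
          setIntegral_mono_on hint hint2 measurableSet_Ioc hpt
      _ = (1 - r) ^ (β - 1) * (Real.log m - Real.log r) := by
          rw [MeasureTheory.integral_const_mul, integral_inv_Ioc hr0 hrm.le]
      _ ≤ (1 - r) ^ (β - 1) * (2 * (1 - r) * Real.log (Real.exp 1 / r)) :=
          mul_le_mul_of_nonneg_left (log_m_bound hr0 hr1) (Real.rpow_nonneg h1r.le _)
      _ = 2 * ((1 - r) ^ (β - 1) * (1 - r)) * Real.log (Real.exp 1 / r) := by ring
      _ = 2 * ((1 - r) ^ β * Real.log (Real.exp 1 / r)) := by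
          have hβe : β - 1 + 1 = β := by ring
          rw [← Real.rpow_add_one h1r.ne' (β - 1), hβe]
          ring
  · refine ⟨2 / β + 4, by positivity, fun r hr0 hr1 => ?_⟩
    set m := (1 + r) / 2 with hm
    set m₁ := min (2 * r) m with hm₁
    have hrm : r < m := by rw [hm]; linarith
    have hm1 : m < 1 := by rw [hm]; linarith
    have hrm₁ : r < m₁ := lt_min (by linarith) hrm
    have hm₁m : m₁ ≤ m := min_le_right _ _
    have hm₁0 : 0 < m₁ := hr0.trans hrm₁
    have hL1 : 1 ≤ Real.log (Real.exp 1 / r) := one_le_logE hr0 hr1.le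
    have h1r : (0:ℝ) < 1 - r := by linarith
    have hX0 : 0 ≤ (1 - r) ^ β := Real.rpow_nonneg h1r.le _
    have hint := core_integrable (m := m) (β := β) hr0 hβ
    have hint1 : IntegrableOn (fun t : ℝ => (1 - r / t) ^ (β - 1) / t) (Ioc r m₁) :=
      hint.mono_set (Ioc_subset_Ioc_right hm₁m)
    have hint2 : IntegrableOn (fun t : ℝ => (1 - r / t) ^ (β - 1) / t) (Ioc m₁ m) :=
      hint.mono_set (Ioc_subset_Ioc_left hrm₁.le)
    have hsplit : ∫ t in Ioc r m, (1 - r / t) ^ (β - 1) / t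
        = (∫ t in Ioc r m₁, (1 - r / t) ^ (β - 1) / t)
          + ∫ t in Ioc m₁ m, (1 - r / t) ^ (β - 1) / t := by
      rw [← Ioc_union_Ioc_eq_Ioc hrm₁.le hm₁m,
        setIntegral_union (Ioc_disjoint_Ioc_of_le le_rfl) measurableSet_Ioc hint1 hint2]
    have hpt1 : ∀ t ∈ Ioc r m₁, (1 - r / t) ^ (β - 1) / t
        ≤ (2 * r) ^ (1 - β) * (1 / r) * (t - r) ^ (β - 1) := by
      intro t ht
      have ht2r : t ≤ 2 * r := ht.2.trans (min_le_left _ _)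
      have ht0 : 0 < t := hr0.trans ht.1
      have htr : 0 < t - r := by linarith [ht.1]
      have e1 : 1 - r / t = (t - r) / t := by field_simp
      have h2 : (t - r) / (2 * r) ≤ (t - r) / t :=
        div_le_div_of_nonneg_left htr.le ht0 ht2r
      have h3 : (1 - r / t) ^ (β - 1) ≤ ((t - r) / (2 * r)) ^ (β - 1) := by
        rw [e1]; exact Real.rpow_le_rpow_of_nonpos (by positivity) h2 (by linarith)
      have h4 : ((t - r) / (2 * r)) ^ (β - 1) = (t - r) ^ (β - 1) * (2 * r) ^ (1 - β) := by
        rw [Real.div_rpow htr.le (by positivity), div_eq_mul_inv,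
          ← Real.rpow_neg (by positivity), neg_sub]
      have h5 : 1 / t ≤ 1 / r := one_div_le_one_div_of_le hr0 ht.1.le
      calc (1 - r / t) ^ (β - 1) / t = (1 - r / t) ^ (β - 1) * (1 / t) := by
            rw [div_eq_mul_one_div]
        _ ≤ (t - r) ^ (β - 1) * (2 * r) ^ (1 - β) * (1 / r) := by
            apply mul_le_mul (le_of_le_of_eq h3 h4) h5 (by positivity) (by positivity)
        _ = (2 * r) ^ (1 - β) * (1 / r) * (t - r) ^ (β - 1) := by ring
    have hB1 : ∫ t in Ioc r m₁, (1 - r / t) ^ (β - 1) / t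
        ≤ 2 / β * ((1 - r) ^ β * Real.log (Real.exp 1 / r)) := by
      have hintb : IntegrableOn
          (fun t : ℝ => (2 * r) ^ (1 - β) * (1 / r) * (t - r) ^ (β - 1)) (Ioc r m₁) :=
        (sub_rpow_integrableOn hβ).const_mul _
      have hm₁r : m₁ - r ≤ 2 * r * (1 - r) := by
        rcases le_total (2 * r) m with h | h
        · rw [hm₁, min_eq_left h]
          rw [hm] at h; nlinarith
        · rw [hm₁, min_eq_right h]
          rw [hm] at h ⊢; nlinarith
      have hmono : (m₁ - r) ^ β ≤ (2 * r) ^ β * (1 - r) ^ β := by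
        rw [← Real.mul_rpow (by positivity) h1r.le]
        exact Real.rpow_le_rpow (by linarith) hm₁r hβ.le
      have h2r : (2 * r) ^ (1 - β) * (2 * r) ^ β = 2 * r := by
        rw [← Real.rpow_add (by positivity)]
        norm_num
      have hkey : (2 * r) ^ (1 - β) * (1 / r) * ((2 * r) ^ β * (1 - r) ^ β / β)
          = 2 / β * (1 - r) ^ β := by
        calc (2 * r) ^ (1 - β) * (1 / r) * ((2 * r) ^ β * (1 - r) ^ β / β)
            = (2 * r) ^ (1 - β) * (2 * r) ^ β * (1 - r) ^ β * (1 / (r * β)) := by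
              field_simp
          _ = 2 * r * (1 - r) ^ β * (1 / (r * β)) := by rw [h2r]
          _ = 2 / β * (1 - r) ^ β := by field_simp
      calc ∫ t in Ioc r m₁, (1 - r / t) ^ (β - 1) / t
          ≤ ∫ t in Ioc r m₁, (2 * r) ^ (1 - β) * (1 / r) * (t - r) ^ (β - 1) :=
            setIntegral_mono_on hint1 hintb measurableSet_Ioc hpt1
        _ = (2 * r) ^ (1 - β) * (1 / r) * ((m₁ - r) ^ β / β) := by
            rw [MeasureTheory.integral_const_mul, integral_sub_rpow hrm₁.le hβ]
        _ ≤ (2 * r) ^ (1 - β) * (1 / r) * ((2 * r) ^ β * (1 - r) ^ β / β) := by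
            apply mul_le_mul_of_nonneg_left
              (div_le_div_of_nonneg_right hmono hβ.le) (by positivity)
        _ = 2 / β * (1 - r) ^ β := hkey
        _ ≤ 2 / β * ((1 - r) ^ β * Real.log (Real.exp 1 / r)) :=
            mul_le_mul_of_nonneg_left (le_mul_of_one_le_right hX0 hL1) (by positivity)
    have hpt2 : ∀ t ∈ Ioc m₁ m, (1 - r / t) ^ (β - 1) / t ≤ 2 ^ (1 - β) * (1 / t) := by
      intro t ht
      have h2rm : 2 * r ≤ m := by
        by_contra hc
        push_neg at hc
        have he : m₁ = m := by rw [hm₁, min_eq_right hc.le]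
        rw [he] at ht
        exact absurd ht.1 (not_lt.2 ht.2)
      have h2rt : 2 * r < t := by
        have := ht.1
        rw [hm₁, min_eq_left h2rm] at this
        exact this
      have ht0 : 0 < t := by linarith
      have h1 : r / t ≤ 1 / 2 := by
        rw [div_le_div_iff₀ ht0 (by norm_num)]; linarith
      have h3 : (1 - r / t) ^ (β - 1) ≤ (1 / 2 : ℝ) ^ (β - 1) :=
        Real.rpow_le_rpow_of_nonpos (by norm_num) (by linarith) (by linarith)
      have h4 : ((1 : ℝ) / 2) ^ (β - 1) = 2 ^ (1 - β) := by
        rw [one_div, Real.inv_rpow (by norm_num), ← Real.rpow_neg (by norm_num), neg_sub]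
      rw [div_eq_mul_one_div]
      exact mul_le_mul_of_nonneg_right (le_of_le_of_eq h3 h4) (by positivity)
    have hB2 : ∫ t in Ioc m₁ m, (1 - r / t) ^ (β - 1) / t
        ≤ 4 * ((1 - r) ^ β * Real.log (Real.exp 1 / r)) := by
      have hintb : IntegrableOn (fun t : ℝ => 2 ^ (1 - β) * (1 / t)) (Ioc m₁ m) :=
        (inv_integrableOn hm₁0).const_mul _
      have h2b : (2:ℝ) ^ (1 - β) ≤ 2 := by
        calc (2:ℝ) ^ (1 - β) ≤ 2 ^ (1:ℝ) :=
              Real.rpow_le_rpow_of_exponent_le (by norm_num) (by linarith)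
          _ = 2 := Real.rpow_one 2
      have hlm : Real.log r ≤ Real.log m₁ := Real.log_le_log hr0 hrm₁.le
      have hnn : 0 ≤ Real.log m - Real.log m₁ :=
        sub_nonneg.2 (Real.log_le_log hm₁0 hm₁m)
      have hlb : Real.log m - Real.log r ≤ 2 * (1 - r) * Real.log (Real.exp 1 / r) :=
        log_m_bound hr0 hr1
      have hpow : (1 - r) ≤ (1 - r) ^ β := by
        have h := Real.rpow_le_rpow_of_exponent_ge h1r (by linarith) hβ1.le
        rwa [Real.rpow_one] at h
      calc ∫ t in Ioc m₁ m, (1 - r / t) ^ (β - 1) / t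
          ≤ ∫ t in Ioc m₁ m, 2 ^ (1 - β) * (1 / t) :=
            setIntegral_mono_on hint2 hintb measurableSet_Ioc hpt2
        _ = 2 ^ (1 - β) * (Real.log m - Real.log m₁) := by
            rw [MeasureTheory.integral_const_mul, integral_inv_Ioc hm₁0 hm₁m]
        _ ≤ 2 * (Real.log m - Real.log r) := by nlinarith [Real.rpow_nonneg (by norm_num : (0:ℝ) ≤ 2) (1 - β)]
        _ ≤ 2 * (2 * (1 - r) * Real.log (Real.exp 1 / r)) := by
            nlinarith
        _ = 4 * ((1 - r) * Real.log (Real.exp 1 / r)) := by ring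
        _ ≤ 4 * ((1 - r) ^ β * Real.log (Real.exp 1 / r)) := by nlinarith
    rw [hsplit]
    nlinarith [hB1, hB2]

lemma step_bound {α aa β bb : ℝ} (hα : 0 ≤ α) (ha : 0 ≤ aa) (hβ : 0 < β) (hb : 0 < bb)
    (n : ℕ) :
    ∃ K : ℝ, 0 ≤ K ∧ ∀ C : ℝ, 0 ≤ C → ∀ g : ℝ → ℝ,
      (∀ x ∈ Ioo (0:ℝ) 1, |g x| ≤ C * x ^ α * (1 - x) ^ (β - 1) *
        Real.log (Real.exp 1 / x) ^ n) →
      ∀ r ∈ Ioo (0:ℝ) 1,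
        |∫ t in Ioc r 1, g (r / t) * (t ^ aa * (1 - t) ^ (bb - 1)) / t| ≤
          C * K * r ^ min α aa * (1 - r) ^ (β + bb - 1) *
            Real.log (Real.exp 1 / r) ^ (n + 1) := by
  obtain ⟨K₁, hK₁0, hK₁⟩ := core_bound hβ
  set cb : ℝ := 2 ^ max (1 - bb) 0 with hcb
  set cβ : ℝ := 2 ^ max (1 - β) 0 with hcβ
  have hcb0 : 0 ≤ cb := Real.rpow_nonneg (by norm_num) _
  have hcβ0 : 0 ≤ cβ := Real.rpow_nonneg (by norm_num) _
  refine ⟨cb * K₁ + 2 * cβ / bb, by positivity, fun C hC g hg r hr => ?_⟩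
  obtain ⟨hr0, hr1⟩ := hr
  set L := Real.log (Real.exp 1 / r) with hL
  have hL1 : 1 ≤ L := one_le_logE hr0 hr1.le
  have hL0 : 0 ≤ L := by linarith
  have hLn : 0 ≤ L ^ n := pow_nonneg hL0 n
  set m := (1 + r) / 2 with hm
  have hrm : r < m := by rw [hm]; linarith
  have hm1 : m < 1 := by rw [hm]; linarith
  have hm0 : 0 < m := lt_trans hr0 hrm
  have hmhalf : (1:ℝ)/2 ≤ m := by rw [hm]; linarith
  have h1r : (0:ℝ) < 1 - r := by linarith
  set μ := min α aa with hμ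
  have hrμ : 0 ≤ r ^ μ := Real.rpow_nonneg hr0.le _
  have h1rb : 0 ≤ (1 - r) ^ (bb - 1) := Real.rpow_nonneg h1r.le _
  have h1rβ : 0 ≤ (1 - r) ^ (β - 1) := Real.rpow_nonneg h1r.le _
  set D₁ : ℝ := C * cb * (1 - r) ^ (bb - 1) * r ^ μ * L ^ n with hD₁
  set D₂ : ℝ := C * cβ * 2 * (1 - r) ^ (β - 1) * r ^ μ * L ^ n with hD₂
  have hD₁0 : 0 ≤ D₁ := by
    rw [hD₁]
    exact mul_nonneg (mul_nonneg (mul_nonneg (mul_nonneg hC hcb0) h1rb) hrμ) hLn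
  have hD₂0 : 0 ≤ D₂ := by
    rw [hD₂]
    exact mul_nonneg (mul_nonneg (mul_nonneg (mul_nonneg
      (mul_nonneg hC hcβ0) (by norm_num)) h1rβ) hrμ) hLn
  -- the common pointwise bound
  have key : ∀ t ∈ Ioc r 1, |g (r / t) * (t ^ aa * (1 - t) ^ (bb - 1)) / t| ≤
      C * r ^ μ * ((1 - r / t) ^ (β - 1)) * L ^ n * ((1 - t) ^ (bb - 1)) * (1 / t) := by
    intro t ht
    have ht0 : 0 < t := hr0.trans ht.1
    have hx0 : 0 < r / t := div_pos hr0 ht0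
    have hx1 : r / t < 1 := (div_lt_one ht0).2 ht.1
    have hrx : r ≤ r / t := by rw [le_div_iff₀ ht0]; nlinarith [ht.2]
    have hP : 0 ≤ t ^ aa * (1 - t) ^ (bb - 1) :=
      mul_nonneg (Real.rpow_nonneg ht0.le _) (Real.rpow_nonneg (by linarith [ht.2]) _)
    have hxβ : 0 ≤ (1 - r / t) ^ (β - 1) := Real.rpow_nonneg (by linarith) _
    have hLx1 : 1 ≤ Real.log (Real.exp 1 / (r / t)) := one_le_logE hx0 hx1.le
    have hLxL : Real.log (Real.exp 1 / (r / t)) ≤ L := logE_anti hr0 hrx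
    have hLxn : Real.log (Real.exp 1 / (r / t)) ^ n ≤ L ^ n :=
      pow_le_pow_left₀ (by linarith) hLxL n
    have hgx := hg (r / t) ⟨hx0, hx1⟩
    have hrt := rt_pow hr0 ht.1 ht.2 hα ha
    calc |g (r / t) * (t ^ aa * (1 - t) ^ (bb - 1)) / t|
        = |g (r / t)| * (t ^ aa * (1 - t) ^ (bb - 1)) / t := by
          rw [abs_div, abs_mul, abs_of_nonneg hP, abs_of_pos ht0]
      _ ≤ (C * (r / t) ^ α * (1 - r / t) ^ (β - 1) *
            Real.log (Real.exp 1 / (r / t)) ^ n) * (t ^ aa * (1 - t) ^ (bb - 1)) / t :=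
          div_le_div_of_nonneg_right (mul_le_mul_of_nonneg_right hgx hP) ht0.le
      _ = (C * ((r / t) ^ α * t ^ aa)) * ((1 - r / t) ^ (β - 1)) *
            (Real.log (Real.exp 1 / (r / t)) ^ n) * ((1 - t) ^ (bb - 1)) * (1 / t) := by
          ring
      _ ≤ C * r ^ μ * ((1 - r / t) ^ (β - 1)) * L ^ n * ((1 - t) ^ (bb - 1)) * (1 / t) := by
          have s1 : C * ((r / t) ^ α * t ^ aa) ≤ C * r ^ μ :=
            mul_le_mul_of_nonneg_left hrt hC
          have s2 : C * ((r / t) ^ α * t ^ aa) * ((1 - r / t) ^ (β - 1)) ≤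
              C * r ^ μ * ((1 - r / t) ^ (β - 1)) :=
            mul_le_mul_of_nonneg_right s1 hxβ
          have s3 : C * ((r / t) ^ α * t ^ aa) * ((1 - r / t) ^ (β - 1)) *
              (Real.log (Real.exp 1 / (r / t)) ^ n) ≤
              C * r ^ μ * ((1 - r / t) ^ (β - 1)) * L ^ n :=
            mul_le_mul s2 hLxn (pow_nonneg (by linarith) n)
              (mul_nonneg (mul_nonneg hC hrμ) hxβ)
          have s4 := mul_le_mul_of_nonneg_right s3
            (Real.rpow_nonneg (by linarith [ht.2] : (0:ℝ) ≤ 1 - t) (bb - 1))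
          exact mul_le_mul_of_nonneg_right s4 (by positivity)
  -- region 1 pointwise bound
  have hpt1 : ∀ t ∈ Ioc r m, |g (r / t) * (t ^ aa * (1 - t) ^ (bb - 1)) / t| ≤
      D₁ * ((1 - r / t) ^ (β - 1) / t) := by
    intro t ht
    have ht1 : t ∈ Ioc r 1 := ⟨ht.1, le_of_lt (lt_of_le_of_lt ht.2 hm1)⟩
    have ht0 : 0 < t := hr0.trans ht.1
    have hx1 : r / t < 1 := (div_lt_one ht0).2 ht.1
    have hxβ : 0 ≤ (1 - r / t) ^ (β - 1) := Real.rpow_nonneg (by linarith) _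
    have hu : (0:ℝ) < 1 - t := by
      have := lt_of_le_of_lt ht.2 hm1; linarith
    have hbb : (1 - t) ^ (bb - 1) ≤ cb * (1 - r) ^ (bb - 1) := by
      apply rpow_sub_one_le hu (by linarith [ht.1])
      rw [hm] at ht; rcases ht with ⟨h1, h2⟩; linarith
    calc |g (r / t) * (t ^ aa * (1 - t) ^ (bb - 1)) / t|
        ≤ C * r ^ μ * ((1 - r / t) ^ (β - 1)) * L ^ n * ((1 - t) ^ (bb - 1)) * (1 / t) :=
          key t ht1
      _ = (C * r ^ μ * L ^ n * ((1 - r / t) ^ (β - 1)) * (1 / t)) * ((1 - t) ^ (bb - 1)) := by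
          ring
      _ ≤ (C * r ^ μ * L ^ n * ((1 - r / t) ^ (β - 1)) * (1 / t)) *
            (cb * (1 - r) ^ (bb - 1)) := by
          apply mul_le_mul_of_nonneg_left hbb
          have : 0 ≤ (1:ℝ) / t := by positivity
          exact mul_nonneg (mul_nonneg (mul_nonneg (mul_nonneg hC hrμ) hLn) hxβ) this
      _ = D₁ * ((1 - r / t) ^ (β - 1) / t) := by
          rw [hD₁]; field_simp
  -- region 2 pointwise bound
  have hpt2 : ∀ t ∈ Ioc m 1, |g (r / t) * (t ^ aa * (1 - t) ^ (bb - 1)) / t| ≤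
      D₂ * ((1 - t) ^ (bb - 1)) := by
    intro t ht
    have ht1 : t ∈ Ioc r 1 := ⟨hrm.trans ht.1, ht.2⟩
    have ht0 : 0 < t := hr0.trans ht1.1
    have hx1 : r / t < 1 := (div_lt_one ht0).2 ht1.1
    have hxpos : (0:ℝ) < 1 - r / t := by linarith
    have h1t : 0 ≤ (1 - t) ^ (bb - 1) := Real.rpow_nonneg (by linarith [ht.2]) _
    have hrtm : r / t ≤ r / m := div_le_div_of_nonneg_left hr0.le hm0 ht.1.le
    have hrmm : (1 - r) / 2 ≤ 1 - r / m := by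
      have h1pr : (0:ℝ) < 1 + r := by linarith
      have e : 1 - r / ((1 + r) / 2) = (1 - r) / (1 + r) := by
        field_simp
        ring
      rw [hm, e]
      exact div_le_div_of_nonneg_left (by linarith) h1pr (by linarith)
    have hβb : (1 - r / t) ^ (β - 1) ≤ cβ * (1 - r) ^ (β - 1) := by
      apply rpow_sub_one_le hxpos
      · have : r ≤ r / t := by rw [le_div_iff₀ ht0]; nlinarith [ht.2]
        linarith
      · have h' : 1 - r / m ≤ 1 - r / t := by linarith [hrtm]
        linarith [hrmm]
    have ht2 : 1 / t ≤ 2 := by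
      rw [div_le_iff₀ ht0]
      nlinarith [ht.1, hmhalf]
    calc |g (r / t) * (t ^ aa * (1 - t) ^ (bb - 1)) / t|
        ≤ C * r ^ μ * ((1 - r / t) ^ (β - 1)) * L ^ n * ((1 - t) ^ (bb - 1)) * (1 / t) :=
          key t ht1
      _ = (C * r ^ μ * L ^ n * ((1 - t) ^ (bb - 1))) * ((1 - r / t) ^ (β - 1)) * (1 / t) := by
          ring
      _ ≤ (C * r ^ μ * L ^ n * ((1 - t) ^ (bb - 1))) * (cβ * (1 - r) ^ (β - 1)) * 2 := by
          have hc0 : 0 ≤ C * r ^ μ * L ^ n * ((1 - t) ^ (bb - 1)) :=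
            mul_nonneg (mul_nonneg (mul_nonneg hC hrμ) hLn) h1t
          apply mul_le_mul (mul_le_mul_of_nonneg_left hβb hc0) ht2 (by positivity)
          exact mul_nonneg hc0 (mul_nonneg hcβ0 h1rβ)
      _ = D₂ * ((1 - t) ^ (bb - 1)) := by
          rw [hD₂]; ring
  -- integrability of the two majorant pieces
  have hsub1 : Ioc r m ⊆ Ioc r 1 := Ioc_subset_Ioc_right hm1.le
  have hsub2 : Ioc m 1 ⊆ Ioc r 1 := Ioc_subset_Ioc_left hrm.le
  have hBint1 : IntegrableOn (fun t : ℝ => D₁ * ((1 - r / t) ^ (β - 1) / t)) (Ioc r m) :=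
    (core_integrable hr0 hβ).const_mul _
  have hBint2 : IntegrableOn (fun t : ℝ => D₂ * ((1 - t) ^ (bb - 1))) (Ioc m 1) :=
    (one_sub_rpow_integrableOn hm1.le hb).const_mul _
  have hGi1 : Integrable ((Ioc r m).indicator fun t : ℝ => D₁ * ((1 - r / t) ^ (β - 1) / t))
      (volume.restrict (Ioc r 1)) := by
    rw [integrable_indicator_iff measurableSet_Ioc, IntegrableOn,
      Measure.restrict_restrict measurableSet_Ioc, inter_eq_self_of_subset_left hsub1]
    exact hBint1
  have hGi2 : Integrable ((Ioc m 1).indicator fun t : ℝ => D₂ * ((1 - t) ^ (bb - 1)))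
      (volume.restrict (Ioc r 1)) := by
    rw [integrable_indicator_iff measurableSet_Ioc, IntegrableOn,
      Measure.restrict_restrict measurableSet_Ioc, inter_eq_self_of_subset_left hsub2]
    exact hBint2
  have hGbound : ∀ᵐ t ∂(volume.restrict (Ioc r 1)),
      ‖g (r / t) * (t ^ aa * (1 - t) ^ (bb - 1)) / t‖ ≤
        (Ioc r m).indicator (fun t : ℝ => D₁ * ((1 - r / t) ^ (β - 1) / t)) t +
          (Ioc m 1).indicator (fun t : ℝ => D₂ * ((1 - t) ^ (bb - 1))) t := by
    refine (ae_restrict_iff' measurableSet_Ioc).2 (Filter.Eventually.of_forall fun t ht => ?_)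
    rcases le_or_gt t m with h | h
    · have htm : t ∈ Ioc r m := ⟨ht.1, h⟩
      have h2 : t ∉ Ioc m 1 := fun hc => absurd hc.1 (not_lt.2 h)
      rw [Real.norm_eq_abs, indicator_of_mem htm, indicator_of_notMem h2, add_zero]
      exact hpt1 t htm
    · have htm : t ∈ Ioc m 1 := ⟨h, ht.2⟩
      have h2 : t ∉ Ioc r m := fun hc => absurd h (not_lt.2 hc.2)
      rw [Real.norm_eq_abs, indicator_of_mem htm, indicator_of_notMem h2, zero_add]
      exact hpt2 t htm
  have habs : |∫ t in Ioc r 1, g (r / t) * (t ^ aa * (1 - t) ^ (bb - 1)) / t| ≤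
      D₁ * (∫ t in Ioc r m, (1 - r / t) ^ (β - 1) / t) +
        D₂ * ∫ t in Ioc m 1, (1 - t) ^ (bb - 1) := by
    calc |∫ t in Ioc r 1, g (r / t) * (t ^ aa * (1 - t) ^ (bb - 1)) / t|
        ≤ ∫ t in Ioc r 1,
            ((Ioc r m).indicator (fun t : ℝ => D₁ * ((1 - r / t) ^ (β - 1) / t)) t +
              (Ioc m 1).indicator (fun t : ℝ => D₂ * ((1 - t) ^ (bb - 1))) t) := by
          rw [← Real.norm_eq_abs]
          exact MeasureTheory.norm_integral_le_of_norm_le (hGi1.add hGi2) hGbound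
      _ = D₁ * (∫ t in Ioc r m, (1 - r / t) ^ (β - 1) / t) +
            D₂ * ∫ t in Ioc m 1, (1 - t) ^ (bb - 1) := by
          rw [MeasureTheory.integral_add hGi1 hGi2,
            MeasureTheory.integral_indicator measurableSet_Ioc,
            MeasureTheory.integral_indicator measurableSet_Ioc,
            Measure.restrict_restrict measurableSet_Ioc,
            Measure.restrict_restrict measurableSet_Ioc,
            inter_eq_self_of_subset_left hsub1, inter_eq_self_of_subset_left hsub2,
            MeasureTheory.integral_const_mul, MeasureTheory.integral_const_mul]
  -- bound the two integrals
  have hI1 : ∫ t in Ioc r m, (1 - r / t) ^ (β - 1) / t ≤ K₁ * ((1 - r) ^ β * L) :=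
    hK₁ r hr0 hr1
  have hI2 : ∫ t in Ioc m 1, (1 - t) ^ (bb - 1) ≤ (1 - r) ^ bb / bb := by
    rw [integral_one_sub_rpow hm1.le hb]
    apply div_le_div_of_nonneg_right _ hb.le
    apply Real.rpow_le_rpow (by linarith) (by linarith) hb.le
  -- final algebra
  have e1 : (1 - r) ^ (bb - 1) * (1 - r) ^ β = (1 - r) ^ (β + bb - 1) := by
    rw [← Real.rpow_add h1r]; congr 1; ring
  have e2 : (1 - r) ^ (β - 1) * (1 - r) ^ bb = (1 - r) ^ (β + bb - 1) := by
    rw [← Real.rpow_add h1r]; congr 1; ring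
  have hfin1 : D₁ * (K₁ * ((1 - r) ^ β * L)) =
      C * (cb * K₁) * (r ^ μ * (1 - r) ^ (β + bb - 1) * L ^ (n + 1)) := by
    rw [hD₁, ← e1, pow_succ]; ring
  have hfin2 : D₂ * ((1 - r) ^ bb / bb) ≤
      C * (2 * cβ / bb) * (r ^ μ * (1 - r) ^ (β + bb - 1) * L ^ (n + 1)) := by
    have heq : D₂ * ((1 - r) ^ bb / bb) =
        C * (2 * cβ / bb) * (r ^ μ * (1 - r) ^ (β + bb - 1) * L ^ n) := by
      rw [hD₂, ← e2]; field_simp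
    rw [heq]
    have hc0 : 0 ≤ C * (2 * cβ / bb) * (r ^ μ * (1 - r) ^ (β + bb - 1)) := by
      have h3 : 0 ≤ (1 - r) ^ (β + bb - 1) := Real.rpow_nonneg h1r.le _
      have h4 : 0 ≤ 2 * cβ / bb := by positivity
      exact mul_nonneg (mul_nonneg hC h4) (mul_nonneg hrμ h3)
    have hLp : L ^ n ≤ L ^ (n + 1) := by
      calc L ^ n = L ^ n * 1 := (mul_one _).symm
        _ ≤ L ^ n * L := mul_le_mul_of_nonneg_left hL1 hLn
        _ = L ^ (n + 1) := (pow_succ L n).symm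
    calc C * (2 * cβ / bb) * (r ^ μ * (1 - r) ^ (β + bb - 1) * L ^ n)
        = (C * (2 * cβ / bb) * (r ^ μ * (1 - r) ^ (β + bb - 1))) * L ^ n := by ring
      _ ≤ (C * (2 * cβ / bb) * (r ^ μ * (1 - r) ^ (β + bb - 1))) * L ^ (n + 1) :=
          mul_le_mul_of_nonneg_left hLp hc0
      _ = C * (2 * cβ / bb) * (r ^ μ * (1 - r) ^ (β + bb - 1) * L ^ (n + 1)) := by ring
  have hIb1 : D₁ * (∫ t in Ioc r m, (1 - r / t) ^ (β - 1) / t) ≤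
      D₁ * (K₁ * ((1 - r) ^ β * L)) := mul_le_mul_of_nonneg_left hI1 hD₁0
  have hIb2 : D₂ * (∫ t in Ioc m 1, (1 - t) ^ (bb - 1)) ≤
      D₂ * ((1 - r) ^ bb / bb) := mul_le_mul_of_nonneg_left hI2 hD₂0
  have hgoal : C * (cb * K₁ + 2 * cβ / bb) * r ^ μ * (1 - r) ^ (β + bb - 1) * L ^ (n + 1) =
      C * (cb * K₁) * (r ^ μ * (1 - r) ^ (β + bb - 1) * L ^ (n + 1)) +
        C * (2 * cβ / bb) * (r ^ μ * (1 - r) ^ (β + bb - 1) * L ^ (n + 1)) := by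
    ring
  linarith [habs, hIb1, hIb2, hfin1, hfin2]

/-- Lemma A: the `(n+1)`-fold Mellin convolution of the functions
`f i r = r^(a i) (1-r)^(b i - 1)` is bounded by
`C r^α (1-r)^(β-1) (ln(e/r))^n` where `α = min a i`, `β = ∑ b i`. -/
theorem iterConv_type (n : ℕ) (a b : ℕ → ℝ)
    (ha : ∀ i ≤ n, 0 ≤ a i) (hb : ∀ i ≤ n, 0 < b i) :
    ∃ C : ℝ, ∀ r ∈ Set.Ioo (0:ℝ) 1,
      |iterConv (fun i r => r ^ a i * (1 - r) ^ (b i - 1)) n r| ≤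
        C * r ^ ((Finset.range (n + 1)).inf' (by simp) a) *
          (1 - r) ^ ((∑ i ∈ Finset.range (n + 1), b i) - 1) *
          Real.log (Real.exp 1 / r) ^ n := by
  induction n with
  | zero =>
    refine ⟨1, fun r hr => ?_⟩
    simp only [iterConv, zero_add, Finset.range_one, Finset.inf'_singleton,
      Finset.sum_singleton, pow_zero, one_mul, mul_one]
    rw [abs_of_nonneg (mul_nonneg (Real.rpow_nonneg hr.1.le _)
      (Real.rpow_nonneg (by linarith [hr.2] : (0:ℝ) ≤ 1 - r) _))]
  | succ n ih =>
    have ha' : ∀ i ≤ n, 0 ≤ a i := fun i hi => ha i (hi.trans (Nat.le_succ n))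
    have hb' : ∀ i ≤ n, 0 < b i := fun i hi => hb i (hi.trans (Nat.le_succ n))
    obtain ⟨C, hc⟩ := ih ha' hb'
    have hα0 : 0 ≤ (Finset.range (n + 1)).inf' (by simp) a :=
      Finset.le_inf' _ _ fun i hi => ha i (by
        have := Finset.mem_range.1 hi; omega)
    have hβ0 : 0 < ∑ i ∈ Finset.range (n + 1), b i :=
      Finset.sum_pos (fun i hi => hb i (by have := Finset.mem_range.1 hi; omega)) ⟨0, by simp⟩
    obtain ⟨K, hK0, hKs⟩ := step_bound hα0 (ha (n + 1) le_rfl) hβ0 (hb (n + 1) le_rfl) n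
    refine ⟨max C 0 * K, fun r hr => ?_⟩
    have hbound : ∀ x ∈ Ioo (0:ℝ) 1,
        |iterConv (fun i r => r ^ a i * (1 - r) ^ (b i - 1)) n x| ≤
          max C 0 * x ^ ((Finset.range (n + 1)).inf' (by simp) a) *
            (1 - x) ^ ((∑ i ∈ Finset.range (n + 1), b i) - 1) *
            Real.log (Real.exp 1 / x) ^ n := by
      intro x hx
      have hLx : (0:ℝ) ≤ Real.log (Real.exp 1 / x) := by
        linarith [one_le_logE hx.1 hx.2.le]
      calc |iterConv (fun i r => r ^ a i * (1 - r) ^ (b i - 1)) n x|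
          ≤ C * x ^ ((Finset.range (n + 1)).inf' (by simp) a) *
            (1 - x) ^ ((∑ i ∈ Finset.range (n + 1), b i) - 1) *
            Real.log (Real.exp 1 / x) ^ n := hc x hx
        _ ≤ max C 0 * x ^ ((Finset.range (n + 1)).inf' (by simp) a) *
            (1 - x) ^ ((∑ i ∈ Finset.range (n + 1), b i) - 1) *
            Real.log (Real.exp 1 / x) ^ n := by
            apply mul_le_mul_of_nonneg_right _ (pow_nonneg hLx n)
            apply mul_le_mul_of_nonneg_right _ (Real.rpow_nonneg (by linarith [hx.2]) _)
            exact mul_le_mul_of_nonneg_right (le_max_left C 0)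
              (Real.rpow_nonneg hx.1.le _)
    have happ := hKs (max C 0) (le_max_right C 0) _ hbound r hr
    simp only [iterConv, mellinConv] at happ ⊢
    have hins : (n + 1) ∉ Finset.range (n + 1) := by simp
    have hset : Finset.range (n + 1 + 1) = insert (n + 1) (Finset.range (n + 1)) :=
      Finset.range_add_one
    simp only [hset, Finset.sum_insert hins]
    have einf : (insert (n + 1) (Finset.range (n + 1))).inf' (Finset.insert_nonempty _ _) a
        = a (n + 1) ⊓ (Finset.range (n + 1)).inf' Finset.nonempty_range_add_one a :=
      Finset.inf'_insert _ _
    convert happ using 2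
    · rw [einf, min_comm, add_comm (b (n + 1)) (∑ x ∈ Finset.range (n + 1), b x)]
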